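/- Let p be an odd prime, ℓ ≥ 1, and α, β integers coprime to p. If the polynomial p² + p^ℓβx + αx² is reducible in ℤ[[x]], then it is reducible in ℤ_p[x]; equivalently, its discriminant p^{2ℓ}β² − 4αp² is a square in the p-adic integers ℤ_p. -/

import Mathlib

open Polynomial

private lemma auxInv (p : ℕ) [Fact p.Prime] (u : ℤ) (hu : ¬ (p:ℤ) ∣ u) :
    ∃ c : ℤ, (p:ℤ) ∣ u * c - 1 := by
  have h0 : (u : ZMod p) ≠ 0 := by
    rwa [Ne, ZMod.intCast_zmod_eq_zero_iff_dvd]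
  refine ⟨(((u : ZMod p)⁻¹).val : ℤ), ?_⟩
  rw [← ZMod.intCast_zmod_eq_zero_iff_dvd]
  push_cast
  rw [ZMod.natCast_val, ZMod.cast_id]
  simp [mul_inv_cancel₀ h0]

private lemma auxLift (p : ℕ) [Fact p.Prime] (e u : ℤ) (hu : ¬ (p:ℤ) ∣ u) (W : ℤ[X]) :
    ∀ m : ℕ, ∃ t : ℤ, (p:ℤ)^m ∣ (C e + C u * X + C (p:ℤ) * W).eval t := by
  obtain ⟨c, hc⟩ := auxInv p u hu
  set S : ℤ[X] := C e + C u * X + C (p:ℤ) * W with hS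
  have hS' : S.derivative = C u + C (p:ℤ) * W.derivative := by
    simp [hS]
  intro m
  induction m with
  | zero => exact ⟨0, one_dvd _⟩
  | succ m ih =>
    rcases Nat.eq_zero_or_pos m with rfl | hm
    · refine ⟨-(e*c), ?_⟩
      have he : S.eval (-(e*c)) = -(e*(u*c-1)) + (p:ℤ) * W.eval (-(e*c)) := by
        simp only [hS, eval_add, eval_mul, eval_C, eval_X]; ring
      rw [pow_one, he]
      exact dvd_add (dvd_neg.mpr (hc.mul_left e)) (dvd_mul_right _ _)
    · obtain ⟨t, w, hw⟩ : ∃ t w, S.eval t = (p:ℤ)^m * w := by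
        obtain ⟨t, ht⟩ := ih; obtain ⟨w, hw⟩ := ht; exact ⟨t, w, hw⟩
      obtain ⟨K, hK⟩ := S.binomExpansion t ((p:ℤ)^m * (-(w*c)))
      refine ⟨t + (p:ℤ)^m * (-(w*c)), ?_⟩
      rw [hK, hS', hw]
      simp only [eval_add, eval_mul, eval_C]
      have expand : (p:ℤ)^m*w + (u + (p:ℤ)*(W.derivative.eval t))*((p:ℤ)^m*(-(w*c)))
            + K*((p:ℤ)^m*(-(w*c)))^2
          = (p:ℤ)^m * (-(w*(u*c-1))) + (p:ℤ)^(m+1) * ((W.derivative.eval t) * (-(w*c)))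
            + (p:ℤ)^(2*m) * (K * (w*c)^2) := by
        rw [pow_succ, two_mul, pow_add]; ring
      rw [expand]
      refine dvd_add (dvd_add ?_ ?_) ?_
      · rw [pow_succ]
        exact mul_dvd_mul_left _ (dvd_neg.mpr (hc.mul_left w))
      · exact dvd_mul_right _ _
      · exact (pow_dvd_pow _ (by omega)).mul_right _

private lemma auxTM (c : ℤ) (f g : PowerSeries ℤ) (n N : ℕ) (hnN : n ≤ N) :
    C (c^n) ∣ (PowerSeries.trunc N ((PowerSeries.rescale c) f)) *
        (PowerSeries.trunc N ((PowerSeries.rescale c) g))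
      - PowerSeries.trunc N ((PowerSeries.rescale c) (f*g)) := by
  rw [C_dvd_iff_dvd_coeff]
  intro k
  rw [coeff_sub, Polynomial.coeff_mul]
  simp only [PowerSeries.coeff_trunc, PowerSeries.coeff_rescale]
  by_cases hk : k < N
  · rw [if_pos hk, PowerSeries.coeff_mul, Finset.mul_sum]
    have hcong : ∀ ij ∈ Finset.HasAntidiagonal.antidiagonal k,
        (if ij.1 < N then c^ij.1 * PowerSeries.coeff ij.1 f else 0) *
        (if ij.2 < N then c^ij.2 * PowerSeries.coeff ij.2 g else 0)
          = c^k * (PowerSeries.coeff ij.1 f * PowerSeries.coeff ij.2 g) := by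
      intro ij hij
      have hij' : ij.1 + ij.2 = k := Finset.HasAntidiagonal.mem_antidiagonal.mp hij
      rw [if_pos (by omega), if_pos (by omega), ← hij', pow_add]
      ring
    rw [Finset.sum_congr rfl hcong, sub_self]
    exact dvd_zero _
  · rw [if_neg hk, sub_zero]
    refine Finset.dvd_sum fun ij hij => ?_
    have hij' : ij.1 + ij.2 = k := Finset.HasAntidiagonal.mem_antidiagonal.mp hij
    by_cases h1 : ij.1 < N
    · by_cases h2 : ij.2 < N
      · rw [if_pos h1, if_pos h2]
        refine (pow_dvd_pow c (show n ≤ k by omega)).trans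
          ⟨PowerSeries.coeff ij.1 f * PowerSeries.coeff ij.2 g, ?_⟩
        rw [← hij', pow_add]; ring
      · rw [if_neg h2, mul_zero]
        exact dvd_zero _
    · rw [if_neg h1, zero_mul]
      exact dvd_zero _

private lemma auxCoeffQ (p : ℤ) (ℓ : ℕ) (α β : ℤ) (k : ℕ) :
    PowerSeries.coeff k ((PowerSeries.C) (p ^ 2) + (PowerSeries.C) (p ^ ℓ * β) * PowerSeries.X +
        (PowerSeries.C) α * PowerSeries.X ^ 2)
      = (if k = 0 then p^2 else 0) + (if k = 1 then p^ℓ*β else 0) + (if k = 2 then α else 0) := by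
  simp only [map_add, PowerSeries.coeff_C, PowerSeries.coeff_C_mul, PowerSeries.coeff_X,
    PowerSeries.coeff_X_pow, mul_ite, mul_one, mul_zero]

theorem stmt_11 (p : ℕ) [Fact p.Prime] (hodd : Odd p) (ℓ : ℕ) (hℓ : 1 ≤ ℓ) (α β : ℤ)
    (hα : Int.gcd (p : ℤ) α = 1) (hβ : Int.gcd (p : ℤ) β = 1)
    (h : ∃ a b : PowerSeries ℤ, ¬ IsUnit a ∧ ¬ IsUnit b ∧
      (PowerSeries.C : ℤ →+* PowerSeries ℤ) ((p : ℤ) ^ 2) +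
        (PowerSeries.C : ℤ →+* PowerSeries ℤ) ((p : ℤ) ^ ℓ * β) * PowerSeries.X +
        (PowerSeries.C : ℤ →+* PowerSeries ℤ) α * PowerSeries.X ^ 2 = a * b) :
    (∃ a b : Polynomial ℤ_[p], ¬ IsUnit a ∧ ¬ IsUnit b ∧
      Polynomial.C ((p : ℤ_[p]) ^ 2) +
        Polynomial.C ((p : ℤ_[p]) ^ ℓ * (β : ℤ_[p])) * Polynomial.X +
        Polynomial.C (α : ℤ_[p]) * Polynomial.X ^ 2 = a * b) ∧
    IsSquare ((p : ℤ_[p]) ^ (2 * ℓ) * (β : ℤ_[p]) ^ 2 - 4 * (α : ℤ_[p]) * (p : ℤ_[p]) ^ 2) := by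
  obtain ⟨a, b, hna, hnb, hab⟩ := h
  have hp : p.Prime := Fact.out
  have hpI : Prime (p:ℤ) := Nat.prime_iff_prime_int.mp hp
  have hp0 : (p:ℤ) ≠ 0 := by exact_mod_cast hp.ne_zero
  have hpne2 : p ≠ 2 := by
    rintro rfl
    exact (Nat.not_odd_iff_even.mpr even_two) hodd
  have hpα : ¬ (p:ℤ) ∣ α := by
    intro hd
    obtain ⟨x, y, hxy⟩ := Int.isCoprime_iff_gcd_eq_one.mpr hα
    have : (p:ℤ) ∣ 1 := by
      rw [← hxy]
      exact dvd_add (Dvd.dvd.mul_left (dvd_refl _) x) (Dvd.dvd.mul_left hd y)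
    exact hpI.not_isUnit (isUnit_of_dvd_one this)
  -- constant coefficients
  have h00 : PowerSeries.constantCoeff a * PowerSeries.constantCoeff b = (p:ℤ)^2 := by
    have := congrArg PowerSeries.constantCoeff hab
    simpa using this.symm
  have hkey : ∀ x y : ℤ, x * y = (p:ℤ)^2 → ¬ IsUnit x → (p:ℤ) ∣ x := by
    intro x y hxy hx
    by_contra hpx
    have hpxy : (p:ℤ) ∣ x * y := by
      rw [hxy]; exact dvd_pow_self _ two_ne_zero
    have hpy : (p:ℤ) ∣ y := (hpI.dvd_mul.mp hpxy).resolve_left hpx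
    obtain ⟨y1, rfl⟩ := hpy
    have h1 : x * y1 = (p:ℤ) := by
      have hcc : (p:ℤ) * (x * y1) = (p:ℤ) * (p:ℤ) := by linear_combination hxy
      exact mul_left_cancel₀ hp0 hcc
    have hpy1 : (p:ℤ) ∣ y1 := by
      have : (p:ℤ) ∣ x * y1 := h1 ▸ dvd_refl _
      exact (hpI.dvd_mul.mp this).resolve_left hpx
    obtain ⟨y2, rfl⟩ := hpy1
    have : x * y2 = 1 := by
      have hcc2 : (p:ℤ) * (x * y2) = (p:ℤ) * 1 := by linear_combination h1
      exact mul_left_cancel₀ hp0 hcc2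
    exact hx (IsUnit.of_mul_eq_one _ this)
  have hnua : ¬ IsUnit (PowerSeries.constantCoeff a) :=
    fun hu => hna (PowerSeries.isUnit_iff_constantCoeff.mpr hu)
  have hnub : ¬ IsUnit (PowerSeries.constantCoeff b) :=
    fun hu => hnb (PowerSeries.isUnit_iff_constantCoeff.mpr hu)
  obtain ⟨e, he⟩ := hkey _ _ h00 hnua
  obtain ⟨f, hf⟩ := hkey _ _ (by rw [mul_comm]; exact h00) hnub
  -- coefficient 2 relation and p ∤ a₁
  have h2 : α = PowerSeries.constantCoeff a * PowerSeries.coeff 2 b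
      + PowerSeries.coeff 1 a * PowerSeries.coeff 1 b
      + PowerSeries.coeff 2 a * PowerSeries.constantCoeff b := by
    have hthis := congrArg (PowerSeries.coeff 2) hab
    rw [auxCoeffQ, PowerSeries.coeff_mul,
      Finset.Nat.sum_antidiagonal_eq_sum_range_succ_mk] at hthis
    simpa [Finset.sum_range_succ, PowerSeries.coeff_zero_eq_constantCoeff] using hthis
  have hpa1 : ¬ (p:ℤ) ∣ PowerSeries.coeff 1 a := by
    intro hd
    apply hpα
    rw [h2, he, hf]
    exact dvd_add (dvd_add (Dvd.dvd.mul_right ⟨e, by ring⟩ _) (Dvd.dvd.mul_right hd _))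
      (Dvd.dvd.mul_left ⟨f, by ring⟩ _)
  -- approximation: for every n there is an integer square close to the discriminant
  have happrox : ∀ n : ℕ, ∃ y : ℤ,
      (p:ℤ)^n ∣ ((p:ℤ)^(2*ℓ)*β^2 - 4*α*(p:ℤ)^2 - y^2) := by
    intro n
    set N := n + 3 with hN
    have hdvdPQ := auxTM (p:ℤ) a b n N (by omega)
    -- explicit form of the truncation of the rescaled product
    have hR : PowerSeries.trunc N ((PowerSeries.rescale (p:ℤ)) (a*b))
        = Polynomial.C ((p:ℤ)^2) + Polynomial.C ((p:ℤ)^(ℓ+1)*β) * Polynomial.X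
          + Polynomial.C ((p:ℤ)^2*α) * Polynomial.X^2 := by
      rw [← hab]
      apply Polynomial.ext
      intro k
      rw [PowerSeries.coeff_trunc]
      match k with
      | 0 =>
        rw [if_pos (by omega), PowerSeries.coeff_rescale, auxCoeffQ]
        simp only [Polynomial.coeff_add, Polynomial.coeff_C_mul, Polynomial.coeff_C,
          Polynomial.coeff_X, Polynomial.coeff_X_pow]
        norm_num
      | 1 =>
        rw [if_pos (by omega), PowerSeries.coeff_rescale, auxCoeffQ]
        simp only [Polynomial.coeff_add, Polynomial.coeff_C_mul, Polynomial.coeff_C,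
          Polynomial.coeff_X, Polynomial.coeff_X_pow]
        norm_num
        ring
      | 2 =>
        rw [if_pos (by omega), PowerSeries.coeff_rescale, auxCoeffQ]
        simp only [Polynomial.coeff_add, Polynomial.coeff_C_mul, Polynomial.coeff_C,
          Polynomial.coeff_X, Polynomial.coeff_X_pow]
        norm_num
      | (k+3) =>
        rw [PowerSeries.coeff_rescale, auxCoeffQ]
        simp only [Polynomial.coeff_add, Polynomial.coeff_C_mul, Polynomial.coeff_C,
          Polynomial.coeff_X, Polynomial.coeff_X_pow]
        have e1 : k + 3 ≠ 0 := by omega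
        have e2 : k + 3 ≠ 1 := by omega
        have e3 : k + 3 ≠ 2 := by omega
        simp [e1, e2, e3]
    -- structure of the truncation of the rescaled a
    set P := PowerSeries.trunc N ((PowerSeries.rescale (p:ℤ)) a) with hPdef
    have hdiv2 : Polynomial.C ((p:ℤ)^2) ∣
        P - Polynomial.C ((p:ℤ)*e) - Polynomial.C ((p:ℤ)*(PowerSeries.coeff 1 a)) * Polynomial.X := by
      rw [C_dvd_iff_dvd_coeff]
      intro k
      simp only [coeff_sub, Polynomial.coeff_C_mul, Polynomial.coeff_C, hPdef,
        PowerSeries.coeff_trunc, PowerSeries.coeff_rescale, Polynomial.coeff_X]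
      match k with
      | 0 =>
        rw [if_pos (by omega)]
        simp [PowerSeries.coeff_zero_eq_constantCoeff, he]
      | 1 =>
        rw [if_pos (by omega)]
        simp
      | (k+2) =>
        have : ((p:ℤ)^2) ∣ (if k+2 < N then (p:ℤ)^(k+2) * PowerSeries.coeff (k+2) a else 0) := by
          split_ifs
          · exact (pow_dvd_pow _ (by omega)).mul_right _
          · exact dvd_zero _
        simpa using this
    obtain ⟨W, hW⟩ := hdiv2
    have hPfac : P = Polynomial.C (p:ℤ) *
        (Polynomial.C e + Polynomial.C (PowerSeries.coeff 1 a) * Polynomial.X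
          + Polynomial.C (p:ℤ) * W) := by
      simp only [map_mul, map_pow] at hW ⊢
      linear_combination hW
    obtain ⟨t, ht⟩ := auxLift p e (PowerSeries.coeff 1 a) hpa1 W n
    have hPt : (p:ℤ)^n ∣ P.eval t := by
      rw [hPfac]
      simp only [Polynomial.eval_mul, Polynomial.eval_C]
      exact ht.mul_left _
    obtain ⟨D, hD⟩ := hdvdPQ
    set Q := PowerSeries.trunc N ((PowerSeries.rescale (p:ℤ)) b) with hQdef
    have hRt : (p:ℤ)^n ∣ ((p:ℤ)^2 + (p:ℤ)^(ℓ+1)*β*t + (p:ℤ)^2*α*t^2) := by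
      have heval : (p:ℤ)^2 + (p:ℤ)^(ℓ+1)*β*t + (p:ℤ)^2*α*t^2
          = P.eval t * Q.eval t - (p:ℤ)^n * D.eval t := by
        have h1 : (PowerSeries.trunc N ((PowerSeries.rescale (p:ℤ)) (a*b))).eval t
            = P.eval t * Q.eval t - (p:ℤ)^n * D.eval t := by
          have := congrArg (Polynomial.eval t) hD
          simp only [Polynomial.eval_sub, Polynomial.eval_mul, Polynomial.eval_C] at this
          linarith [this]
        rw [← h1, hR]
        simp only [Polynomial.eval_add, Polynomial.eval_mul, Polynomial.eval_C,
          Polynomial.eval_X, Polynomial.eval_pow]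
      rw [heval]
      exact dvd_sub (hPt.mul_right _) (dvd_mul_right _ _)
    refine ⟨2*α*((p:ℤ)*t) + (p:ℤ)^ℓ*β, ?_⟩
    obtain ⟨r, hr⟩ := hRt
    refine ⟨-4*α*r, ?_⟩
    linear_combination (-4*α) * hr
  -- pass to ℤ_p : the discriminant is a square
  choose y hy using happrox
  set disc : ℤ_[p] := (p : ℤ_[p]) ^ (2 * ℓ) * (β : ℤ_[p]) ^ 2 - 4 * (α : ℤ_[p]) * (p : ℤ_[p]) ^ 2
    with hdisc
  have hsq : IsSquare disc := by
    have hZ : IsClosed (Set.range (fun s : ℤ_[p] => s * s)) :=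
      (isCompact_range (continuous_id.mul continuous_id)).isClosed
    have hbound : ∀ n : ℕ, ‖((y n : ℤ_[p]) * (y n : ℤ_[p]) - disc)‖ ≤ (p:ℝ)^(-(n:ℤ)) := by
      intro n
      have hcast : ((y n : ℤ_[p]) * (y n : ℤ_[p]) - disc)
          = (((y n^2 - ((p:ℤ)^(2*ℓ)*β^2 - 4*α*(p:ℤ)^2)) : ℤ) : ℤ_[p]) := by
        rw [hdisc]; push_cast; ring
      rw [hcast, PadicInt.norm_int_le_pow_iff_dvd]
      have := hy n
      have heq : y n^2 - ((p:ℤ)^(2*ℓ)*β^2 - 4*α*(p:ℤ)^2)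
          = -(((p:ℤ)^(2*ℓ)*β^2 - 4*α*(p:ℤ)^2 - (y n)^2)) := by ring
      rw [heq]
      exact dvd_neg.mpr this
    have htend : Filter.Tendsto (fun n : ℕ => (y n : ℤ_[p]) * (y n : ℤ_[p]))
        Filter.atTop (nhds disc) := by
      rw [tendsto_iff_norm_sub_tendsto_zero]
      refine squeeze_zero (fun n => norm_nonneg _) hbound ?_
      have hlim : Filter.Tendsto (fun n : ℕ => ((p:ℝ)⁻¹)^n) Filter.atTop (nhds 0) := by
        apply tendsto_pow_atTop_nhds_zero_of_lt_one
        · positivity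
        · rw [inv_lt_one_iff₀]
          right
          exact_mod_cast hp.one_lt
      have : (fun n : ℕ => (p:ℝ)^(-(n:ℤ))) = fun n : ℕ => ((p:ℝ)⁻¹)^n := by
        funext n
        rw [zpow_neg, zpow_natCast, inv_pow]
      rw [this]
      exact hlim
    have hmem : disc ∈ Set.range (fun s : ℤ_[p] => s * s) :=
      hZ.mem_of_tendsto htend (Filter.Eventually.of_forall fun n => ⟨_, rfl⟩)
    obtain ⟨s, hs⟩ := hmem
    exact ⟨s, hs.symm⟩
  refine ⟨?_, hsq⟩
  -- build the factorization over ℤ_p from the square root of the discriminant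
  obtain ⟨s, hs⟩ := hsq
  have h2α : IsUnit (2*(α:ℤ_[p])) := by
    rw [show (2*(α:ℤ_[p])) = (((2*α : ℤ)) : ℤ_[p]) by push_cast; ring, PadicInt.isUnit_iff]
    refine le_antisymm (PadicInt.norm_le_one _) ?_
    rw [← not_lt]
    intro hlt
    rcases hpI.dvd_mul.mp ((PadicInt.norm_int_lt_one_iff_dvd _).mp hlt) with hd | hd
    · have : p ∣ 2 := by exact_mod_cast hd
      exact hpne2 ((Nat.prime_dvd_prime_iff_eq hp Nat.prime_two).mp this)
    · exact hpα hd
  have hα0 : (α:ℤ_[p]) ≠ 0 := by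
    intro h0
    exact h2α.ne_zero (by rw [h0, mul_zero])
  obtain ⟨v, hv⟩ := h2α
  set w : ℤ_[p] := ((v⁻¹ : ℤ_[p]ˣ) : ℤ_[p]) with hwdef
  have hw : w * (2*(α:ℤ_[p])) = 1 := by
    rw [hwdef, ← hv]
    exact v.inv_mul
  set c : ℤ_[p] := w * (-((p:ℤ_[p])^ℓ*(β:ℤ_[p])) + s) with hc
  set d : ℤ_[p] := w * (-((p:ℤ_[p])^ℓ*(β:ℤ_[p])) - s) with hd
  have h1 : (α:ℤ_[p]) * (c+d) = -((p:ℤ_[p])^ℓ*(β:ℤ_[p])) := by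
    rw [hc, hd]
    linear_combination (-((p:ℤ_[p])^ℓ*(β:ℤ_[p]))) * hw
  have h2cd : (α:ℤ_[p]) * (c*d) = (p:ℤ_[p])^2 := by
    rw [hc, hd]
    linear_combination ((p:ℤ_[p])^2*(2*(α:ℤ_[p])*w+1)) * hw + ((α:ℤ_[p])*w^2) * hs
  refine ⟨Polynomial.C (α:ℤ_[p]) * (Polynomial.X - Polynomial.C c),
    Polynomial.X - Polynomial.C d, ?_, ?_, ?_⟩
  · apply Polynomial.not_isUnit_of_natDegree_pos
    rw [Polynomial.natDegree_C_mul hα0, Polynomial.natDegree_X_sub_C]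
    omega
  · apply Polynomial.not_isUnit_of_natDegree_pos
    rw [Polynomial.natDegree_X_sub_C]
    omega
  · have hC1 : Polynomial.C ((p : ℤ_[p]) ^ ℓ * (β : ℤ_[p]))
        = - Polynomial.C ((α:ℤ_[p]) * (c+d)) := by
      rw [h1, map_neg, neg_neg]
    have hC2 : Polynomial.C ((p : ℤ_[p]) ^ 2)
        = Polynomial.C ((α:ℤ_[p]) * (c*d)) := by
      rw [h2cd]
    rw [hC1, hC2]
    simp only [map_mul, map_add]
    ring
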